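/- Let μ be a finite Borel measure on ℝ and for a ∈ ℝ let μ_a denote the push-forward of μ under translation by a. If the total variation distance ‖μ_a − μ‖_TV tends to 0 as a → 0, then μ is absolutely continuous with respect to Lebesgue measure. -/

import Mathlib

open MeasureTheory Filter

lemma key_ineq (μ ν : Measure ℝ) [IsFiniteMeasure μ] [IsFiniteMeasure ν] {A : Set ℝ}
    (hA : MeasurableSet A) :
    μ A ≤ ν A + (ν.toSignedMeasure - μ.toSignedMeasure).totalVariation Set.univ := by
  set d := ν.toSignedMeasure - μ.toSignedMeasure with hd
  set j := d.toJordanDecomposition with hj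
  have hTVfin : d.totalVariation Set.univ ≠ ⊤ := by
    rw [SignedMeasure.totalVariation]
    simp [ENNReal.add_ne_top, measure_ne_top]
  have h1 : d A = (ν A).toReal - (μ A).toReal := by
    rw [hd, VectorMeasure.sub_apply, Measure.toSignedMeasure_apply_measurable hA,
      Measure.toSignedMeasure_apply_measurable hA]
    rfl
  have h2 : d A = (j.posPart A).toReal - (j.negPart A).toReal := by
    conv_lhs => rw [← d.toSignedMeasure_toJordanDecomposition]
    rw [JordanDecomposition.toSignedMeasure, Measure.toSignedMeasure_sub_apply hA]
    rfl
  have h3 : (μ A).toReal ≤ (ν A).toReal + (d.totalVariation Set.univ).toReal := by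
    have hneg : (j.negPart A).toReal ≤ (d.totalVariation Set.univ).toReal := by
      apply ENNReal.toReal_mono hTVfin
      calc j.negPart A ≤ j.negPart Set.univ := measure_mono (Set.subset_univ _)
        _ ≤ d.totalVariation Set.univ := by
            rw [SignedMeasure.totalVariation]; exact le_add_self
    have : (μ A).toReal = (ν A).toReal - d A := by rw [h1]; ring
    rw [this, h2]
    have hp : 0 ≤ (j.posPart A).toReal := ENNReal.toReal_nonneg
    linarith
  rw [← ENNReal.ofReal_toReal (measure_ne_top μ A), ← ENNReal.ofReal_toReal (measure_ne_top ν A),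
    ← ENNReal.ofReal_toReal hTVfin, ← ENNReal.ofReal_add ENNReal.toReal_nonneg
      ENNReal.toReal_nonneg]
  exact ENNReal.ofReal_le_ofReal h3

lemma ae_translate_null (μ : Measure ℝ) [IsFiniteMeasure μ] {t : Set ℝ}
    (ht : MeasurableSet t) (ht0 : volume t = 0) :
    ∀ᵐ a ∂(volume : Measure ℝ), μ ((fun x => x + a) ⁻¹' t) = 0 := by
  have hmeas : Measurable (fun p : ℝ × ℝ => t.indicator (fun _ => (1 : ENNReal)) (p.2 + p.1)) :=
    (measurable_const.indicator ht).comp (measurable_snd.add measurable_fst)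
  have hswap : ∫⁻ a, ∫⁻ x, t.indicator (fun _ => (1 : ENNReal)) (x + a) ∂μ ∂volume
      = ∫⁻ x, ∫⁻ a, t.indicator (fun _ => (1 : ENNReal)) (x + a) ∂volume ∂μ :=
    lintegral_lintegral_swap hmeas.aemeasurable
  have hinner : ∀ x : ℝ, ∫⁻ a, t.indicator (fun _ => (1 : ENNReal)) (x + a) ∂volume = 0 := by
    intro x
    have : ∀ a : ℝ, t.indicator (fun _ => (1 : ENNReal)) (x + a)
        = ((fun a => x + a) ⁻¹' t).indicator (fun _ => (1 : ENNReal)) a := by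
      intro a; rfl
    simp_rw [this]
    rw [lintegral_indicator (measurable_const_add x ht)]
    simp [measure_preimage_add volume x t, ht0]
  have hzero : ∫⁻ a, μ ((fun x => x + a) ⁻¹' t) ∂(volume : Measure ℝ) = 0 := by
    have : ∀ a : ℝ, μ ((fun x => x + a) ⁻¹' t)
        = ∫⁻ x, t.indicator (fun _ => (1 : ENNReal)) (x + a) ∂μ := by
      intro a
      rw [← lintegral_indicator_one (measurable_add_const a ht)]
      congr 1
    simp_rw [this, hswap]
    simp [hinner]
  have hm : Measurable fun a : ℝ => ∫⁻ x, t.indicator (fun _ => (1 : ENNReal)) (x + a) ∂μ :=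
    Measurable.lintegral_prod_right hmeas
  have := (lintegral_eq_zero_iff (by
    have : (fun a : ℝ => μ ((fun x => x + a) ⁻¹' t))
        = fun a => ∫⁻ x, t.indicator (fun _ => (1 : ENNReal)) (x + a) ∂μ := by
      funext a
      rw [← lintegral_indicator_one (measurable_add_const a ht)]
      congr 1
    rw [this]; exact hm)).mp hzero
  filter_upwards [this] with a ha using ha

/-- If the total variation distance between a finite Borel measure on ℝ and its
translates tends to 0 as the translation tends to 0, then the measure is
absolutely continuous with respect to Lebesgue measure. -/
theorem stmt_0 (μ : Measure ℝ) [IsFiniteMeasure μ]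
    (h : Tendsto (fun a : ℝ =>
      ((μ.map (fun x => x + a)).toSignedMeasure - μ.toSignedMeasure).totalVariation Set.univ)
      (nhds 0) (nhds 0)) :
    μ ≪ (volume : Measure ℝ) := by
  refine Measure.AbsolutelyContinuous.mk fun t ht ht0 => ?_
  have key : ∀ ε : ENNReal, 0 < ε → μ t ≤ ε := by
    intro ε hε
    have hev : ∀ᶠ a in nhds (0 : ℝ),
        ((μ.map (fun x => x + a)).toSignedMeasure - μ.toSignedMeasure).totalVariation Set.univ
          < ε := h.eventually_lt_const hε
    have hae := ae_translate_null μ ht ht0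
    -- the set where the translate is null has full measure; hev gives positive measure set
    have hpos : (0 : ENNReal) < volume {a : ℝ |
        ((μ.map (fun x => x + a)).toSignedMeasure - μ.toSignedMeasure).totalVariation Set.univ
          < ε} := by
      exact Measure.measure_pos_of_nonempty_interior _ ⟨0, mem_interior_iff_mem_nhds.mpr hev⟩
    have hbad : volume {a : ℝ | ¬ μ ((fun x => x + a) ⁻¹' t) = 0} = 0 := by
      rw [← MeasureTheory.ae_iff]; exact hae
    have hne : (({a : ℝ |
        ((μ.map (fun x => x + a)).toSignedMeasure - μ.toSignedMeasure).totalVariation Set.univ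
          < ε}) \ {a : ℝ | ¬ μ ((fun x => x + a) ⁻¹' t) = 0}).Nonempty := by
      apply nonempty_of_measure_ne_zero (μ := (volume : Measure ℝ))
      rw [measure_diff_null hbad]
      exact hpos.ne'
    obtain ⟨a, haTV, hanull⟩ := hne
    simp only [Set.mem_setOf_eq, not_not] at haTV hanull
    have : IsFiniteMeasure (μ.map (fun x => x + a)) :=
      Measure.isFiniteMeasure_map μ _
    calc μ t ≤ (μ.map (fun x => x + a)) t +
          ((μ.map (fun x => x + a)).toSignedMeasure - μ.toSignedMeasure).totalVariation Set.univ :=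
            key_ineq μ _ ht
      _ = ((μ.map (fun x => x + a)).toSignedMeasure - μ.toSignedMeasure).totalVariation Set.univ := by
            rw [Measure.map_apply (measurable_add_const a) ht, hanull, zero_add]
      _ ≤ ε := haTV.le
  by_contra hne
  obtain ⟨ε, hε, hεlt⟩ := exists_between (pos_iff_ne_zero.mpr hne)
  exact absurd (key ε hε) (not_le.mpr hεlt)
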